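/- Let b > 0 and define μ̃(z) = (1/(2b))·ψ₁(1 + z/(2b)) − 1/(z + 2b), where ψ₁ is the trigamma function. Then there exists a constant M > 0, depending only on b, with the following property: for every A > 2b, every B > 0, and every continuous function y on the vertical line {A + iη : η ∈ ℝ} satisfying |y(A + iη)| ≤ B/|A + iη|² for all η ∈ ℝ, the convolution (μ̃ ∗ y)(z) = (1/(2π)) ∫_{−∞}^{+∞} y(A + iη)·μ̃(z − A − iη) dη converges absolutely for every z with Re z ≥ A and satisfies |(μ̃ ∗ y)(z)| ≤ M·b·B/|z|² for all z with Re z ≥ A. -/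

import Mathlib

open Complex MeasureTheory
open Filter

lemma summable_shift : Summable (fun n : ℕ => 1 / ((n : ℝ) + 1) ^ 2) := by
  have h : Summable (fun n : ℕ => 1 / (n : ℝ) ^ 2) :=
    (Real.summable_one_div_nat_pow).2 one_lt_two
  have := (summable_nat_add_iff 1).2 h
  simpa using this

lemma telescope_hasSum (g : ℕ → ℝ) (hg : ∀ n, g (n + 1) ≤ g n) (hgnonneg : ∀ n, 0 ≤ g n)
    (h0 : Filter.Tendsto g atTop (nhds 0)) :
    HasSum (fun n => g n - g (n + 1)) (g 0) := by
  have hsum : Summable (fun n => g n - g (n + 1)) := by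
    apply summable_of_sum_range_le (c := g 0) (fun n => sub_nonneg.2 (hg n))
    intro n
    rw [Finset.sum_range_sub' g]
    linarith [hgnonneg n]
  have ht := hsum.hasSum.tendsto_sum_nat
  have heq : (fun n => ∑ i ∈ Finset.range n, (g i - g (i + 1))) = fun n => g 0 - g n :=
    funext fun n => Finset.sum_range_sub' g n
  rw [heq] at ht
  have ht2 : Filter.Tendsto (fun n => g 0 - g n) atTop (nhds (g 0)) := by
    simpa using tendsto_const_nhds.sub h0
  have h3 := tendsto_nhds_unique ht ht2
  exact h3 ▸ hsum.hasSum

lemma telescope_hasSum_C (f : ℕ → ℂ) (hsum : Summable (fun n => f n - f (n + 1)))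
    (h0 : Filter.Tendsto f atTop (nhds 0)) :
    HasSum (fun n => f n - f (n + 1)) (f 0) := by
  have ht := hsum.hasSum.tendsto_sum_nat
  have heq : (fun n => ∑ i ∈ Finset.range n, (f i - f (i + 1))) = fun n => f 0 - f n :=
    funext fun n => Finset.sum_range_sub' f n
  rw [heq] at ht
  have ht2 : Filter.Tendsto (fun n => f 0 - f n) atTop (nhds (f 0)) := by
    simpa using tendsto_const_nhds.sub h0
  have h3 := tendsto_nhds_unique ht ht2
  exact h3 ▸ hsum.hasSum

lemma lorentz0_integrable (α : ℝ) (hα : 0 < α) :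
    Integrable (fun η : ℝ => (α ^ 2 + η ^ 2)⁻¹) := by
  have h : (fun η : ℝ => (α ^ 2 + η ^ 2)⁻¹)
      = fun η => (fun x : ℝ => α⁻¹ * α⁻¹ * (1 + x ^ 2)⁻¹) (α⁻¹ * η) := by
    funext η
    have hα' : α ≠ 0 := hα.ne'
    field_simp
  rw [h]
  exact (integrable_inv_one_add_sq.const_mul _).comp_mul_left' (inv_ne_zero hα.ne')

lemma lorentz0_integral (α : ℝ) (hα : 0 < α) :
    ∫ η : ℝ, (α ^ 2 + η ^ 2)⁻¹ = Real.pi / α := by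
  have h := MeasureTheory.Measure.integral_comp_mul_left (fun u : ℝ => (α ^ 2 + u ^ 2)⁻¹) α
  have h2 : (fun x : ℝ => (α ^ 2 + (α * x) ^ 2)⁻¹) = fun x => α⁻¹ * α⁻¹ * (1 + x ^ 2)⁻¹ := by
    funext x
    have hα' : α ≠ 0 := hα.ne'
    field_simp
  rw [h2] at h
  rw [MeasureTheory.integral_const_mul, integral_univ_inv_one_add_sq] at h
  have hαabs : |α⁻¹| = α⁻¹ := abs_of_pos (inv_pos.2 hα)
  rw [hαabs, smul_eq_mul] at h
  have hα' : α ≠ 0 := hα.ne'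
  have key : (∫ y : ℝ, (α ^ 2 + y ^ 2)⁻¹) = α * (α⁻¹ * (∫ y : ℝ, (α ^ 2 + y ^ 2)⁻¹)) := by
    field_simp
  rw [key, ← h]
  field_simp

lemma prod_bound (a c r : ℝ) (ha : 0 < a) (hc : 0 < c) (hr : 0 < r) (h : r ≤ a + c) :
    1 / (a ^ 2 * c ^ 2) ≤ 4 / r ^ 2 * (1 / a ^ 2 + 1 / c ^ 2) := by
  have h2 : r ^ 2 ≤ 2 * (a ^ 2 + c ^ 2) := by nlinarith [sq_nonneg (a - c)]
  have h3 : 4 / r ^ 2 * (1 / a ^ 2 + 1 / c ^ 2) = 4 * (a ^ 2 + c ^ 2) / (r ^ 2 * (a ^ 2 * c ^ 2)) := by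
    field_simp
    ring
  rw [h3, div_le_div_iff₀ (by positivity) (by positivity)]
  nlinarith [mul_pos (mul_pos (pow_pos ha 2) (pow_pos hc 2)) (pow_pos hr 2),
    mul_le_mul_of_nonneg_left h2 (le_of_lt (mul_pos (pow_pos ha 2) (pow_pos hc 2)))]

/-- The trigamma function `ψ₁(w) = (d/dw) Γ'(w)/Γ(w) = (d²/dw²) log Γ(w)`, given by its
standard (everywhere valid) series representation `ψ₁(w) = Σ_{n≥0} 1/(w+n)²`. -/
noncomputable def trigamma (w : ℂ) : ℂ := ∑' n : ℕ, 1 / (w + (n : ℂ)) ^ 2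

set_option maxHeartbeats 1000000 in
lemma mu_bound (b : ℝ) (hb : 0 < b) (z : ℂ) (hz : 0 ≤ z.re) :
    ‖1 / (2 * (b : ℂ)) * trigamma (1 + z / (2 * (b : ℂ))) - 1 / (z + 2 * (b : ℂ))‖
      ≤ 16 * b / ‖z + 2 * b‖ ^ 2 := by
  set c : ℝ := ‖z + 2 * b‖ with hc
  have hb2 : (0:ℝ) < 2 * b := by linarith
  have hcpos : 0 < c := by
    have : (0:ℝ) < (z + 2 * b).re := by
      simp only [Complex.add_re, Complex.mul_re, Complex.re_ofNat, Complex.ofReal_re,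
        Complex.im_ofNat, Complex.ofReal_im]
      nlinarith
    calc (0:ℝ) < (z + 2 * b).re := this
    _ ≤ ‖z + 2 * b‖ := Complex.re_le_norm _
  set d : ℕ → ℂ := fun n => z + 2 * b * ((n : ℂ) + 1) with hd
  have hdre : ∀ n : ℕ, 2 * b * ((n : ℝ) + 1) ≤ (d n).re := by
    intro n
    simp only [hd, Complex.add_re, Complex.mul_re, Complex.re_ofNat, Complex.ofReal_re,
      Complex.im_ofNat, Complex.ofReal_im, Complex.natCast_re, Complex.one_re,
      Complex.natCast_im, Complex.one_im, Complex.add_im]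
    push_cast
    nlinarith
  have habs1 : ∀ n : ℕ, 2 * b * ((n : ℝ) + 1) ≤ ‖d n‖ :=
    fun n => le_trans (hdre n) (Complex.re_le_norm _)
  have habs2 : ∀ n : ℕ, c ≤ ‖d n‖ := by
    intro n
    rw [hc]
    have h1 : Complex.normSq (z + 2 * b) ≤ Complex.normSq (d n) := by
      simp only [hd, Complex.normSq_apply, Complex.add_re, Complex.add_im, Complex.mul_re,
        Complex.mul_im, Complex.re_ofNat, Complex.im_ofNat, Complex.ofReal_re, Complex.ofReal_im,
        Complex.natCast_re, Complex.natCast_im, Complex.one_re, Complex.one_im]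
      push_cast
      ring_nf
      nlinarith [mul_nonneg (mul_nonneg hb.le (Nat.cast_nonneg (α := ℝ) n)) hz,
        mul_nonneg (mul_nonneg hb.le hb.le) (mul_nonneg (Nat.cast_nonneg (α := ℝ) n) (Nat.cast_nonneg (α := ℝ) n)),
        mul_nonneg (mul_nonneg hb.le hb.le) (Nat.cast_nonneg (α := ℝ) n)]
    simpa only [Complex.norm_def] using Real.sqrt_le_sqrt h1
  have habs_half : ∀ n : ℕ, (c + 2 * b * ((n : ℝ) + 1)) / 2 ≤ ‖d n‖ := by
    intro n
    have := habs1 n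
    have := habs2 n
    linarith
  have hdne : ∀ n : ℕ, d n ≠ 0 := by
    intro n h0
    have := hdre n
    rw [h0] at this
    simp only [Complex.zero_re] at this
    nlinarith [Nat.cast_nonneg (α := ℝ) n]
  have h2bC : (2 * (b:ℂ)) ≠ 0 := by
    simp only [ne_eq, mul_eq_zero, OfNat.ofNat_ne_zero, Complex.ofReal_eq_zero, false_or]
    exact hb.ne'
  -- the shifted argument of trigamma
  set w : ℂ := 1 + z / (2 * (b : ℂ)) with hw
  have hwn : ∀ n : ℕ, w + n = d n / (2 * (b:ℂ)) := by
    intro n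
    have hbC : (b:ℂ) ≠ 0 := by exact_mod_cast hb.ne'
    rw [hw, hd]
    field_simp
    ring
  have hwn_abs : ∀ n : ℕ, ((n:ℝ) + 1) ≤ ‖w + n‖ := by
    intro n
    rw [hwn n]
    rw [norm_div]
    have h2b_abs : ‖2 * (b:ℂ)‖ = 2 * b := by
      rw [norm_mul, Complex.norm_real, Real.norm_eq_abs, abs_of_pos hb]
      simp
    rw [h2b_abs, le_div_iff₀ hb2]
    calc ((n:ℝ) + 1) * (2 * b) = 2 * b * ((n:ℝ) + 1) := by ring
    _ ≤ ‖d n‖ := habs1 n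
  have hwn_ne : ∀ n : ℕ, w + (n:ℂ) ≠ 0 := by
    intro n h0
    have := hwn_abs n
    rw [h0] at this
    simp at this
    nlinarith [Nat.cast_nonneg (α := ℝ) n]
  -- summability of trigamma series
  have hsum_tri : Summable (fun n : ℕ => 1 / (w + (n:ℂ)) ^ 2) := by
    apply Summable.of_norm_bounded summable_shift
    intro n
    have h := hwn_abs n
    have hpos : (0:ℝ) < ‖w + (n:ℂ)‖ := lt_of_lt_of_le (by positivity) h
    rw [norm_div, norm_one, norm_pow]
    have h2 : ((n:ℝ)+1)^2 ≤ ‖w + (n:ℂ)‖^2 := by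
      apply pow_le_pow_left₀ (by positivity) h
    rw [div_le_div_iff₀ (by positivity) (by positivity)]
    nlinarith [h2]
  -- Step 1: trigamma part as a sum over d n
  have hfun1 : (fun n : ℕ => (2*(b:ℂ))/(d n)^2) = fun n : ℕ => 1/(2*(b:ℂ)) * (1/(w+(n:ℂ))^2) := by
    funext n
    rw [hwn n, div_pow]
    rw [eq_comm]
    field_simp
  have h1 : HasSum (fun n : ℕ => (2*(b:ℂ))/(d n)^2) (1/(2*(b:ℂ)) * trigamma w) := by
    rw [hfun1]
    simpa [trigamma] using (hsum_tri.hasSum).mul_left (1/(2*(b:ℂ)))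
  -- Step 2: telescoping sum for 1/(z+2b)
  have hrec : ∀ n : ℕ, d (n+1) = d n + 2*(b:ℂ) := by
    intro n
    simp only [hd]
    push_cast
    ring
  have hfn : ∀ n : ℕ, (1:ℂ)/(d n) - 1/(d (n+1)) = (2*(b:ℂ))/(d n * d (n+1)) := by
    intro n
    have h1' := hdne n
    have h2' := hdne (n+1)
    rw [div_sub_div _ _ h1' h2', hrec n]
    congr 1
    ring
  have hd_abs_pos : ∀ n : ℕ, (0:ℝ) < ‖d n‖ := by
    intro n
    have := habs1 n
    nlinarith [Nat.cast_nonneg (α := ℝ) n]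
  have hnorm_fn : ∀ n : ℕ, ‖(1:ℂ)/(d n) - 1/(d (n+1))‖ ≤ (1/(2*b)) * (1/((n:ℝ)+1)^2) := by
    intro n
    have h2b : ‖(2*(b:ℂ))‖ = 2*b := by
      rw [norm_mul, Complex.norm_real, Real.norm_eq_abs, abs_of_pos hb]
      simp
    rw [hfn n, norm_div, h2b]
    have e1 := habs1 n
    have e2 := habs1 (n+1)
    push_cast at e2
    have p1 : (0:ℝ) < 2*b*((n:ℝ)+1) := by positivity
    have p2 : (0:ℝ) < 2*b*((n:ℝ)+1+1) := by positivity
    have hR : 1/(2*b)*(1/((n:ℝ)+1)^2) = (2*b)/((2*b*((n:ℝ)+1))*(2*b*((n:ℝ)+1))) := by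
      field_simp
    rw [hR, norm_mul]
    refine div_le_div_of_nonneg_left (by positivity) (by positivity) ?_
    calc (2*b*((n:ℝ)+1))*(2*b*((n:ℝ)+1)) ≤ (2*b*((n:ℝ)+1))*(2*b*((n:ℝ)+1+1)) := by nlinarith
    _ ≤ ‖d n‖ * ‖d (n+1)‖ := mul_le_mul e1 e2 p2.le (hd_abs_pos n).le
  have hsum2 : Summable (fun n : ℕ => (1:ℂ)/(d n) - 1/(d (n+1))) :=
    Summable.of_norm_bounded (summable_shift.mul_left _) hnorm_fn
  have hlim : Filter.Tendsto (fun n : ℕ => (1:ℂ)/(d n)) Filter.atTop (nhds 0) := by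
    rw [tendsto_zero_iff_norm_tendsto_zero]
    apply squeeze_zero (fun n => norm_nonneg _) (g := fun n : ℕ => 1/(2*b*((n:ℝ)+1)))
    · intro n
      rw [norm_div, norm_one]
      rw [div_le_div_iff₀ (by exact hd_abs_pos n) (by positivity)]
      simpa [one_mul] using habs1 n
    · have : Filter.Tendsto (fun n : ℕ => 2*b*((n:ℝ)+1)) Filter.atTop Filter.atTop := by
        apply Filter.Tendsto.const_mul_atTop hb2
        exact tendsto_atTop_add_const_right _ 1 tendsto_natCast_atTop_atTop
      exact this.inv_tendsto_atTop.congr (fun n => by simp [one_div])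
  have h2 : HasSum (fun n : ℕ => (1:ℂ)/(d n) - 1/(d (n+1))) (1/(z + 2*(b:ℂ))) := by
    have ht := telescope_hasSum_C (fun n => 1/(d n)) hsum2 hlim
    have hd0 : d 0 = z + 2*(b:ℂ) := by
      simp only [hd]
      push_cast
      ring
    simpa only [hd0] using ht
  have h3 := h1.sub h2
  rw [← h3.tsum_eq]
  -- Step 3: bound the sum
  set G : ℕ → ℝ := fun n => 16*b/(c+2*b*(n:ℝ))^2 with hG
  have hGpos_den : ∀ n : ℕ, (0:ℝ) < c + 2*b*(n:ℝ) := by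
    intro n
    nlinarith [Nat.cast_nonneg (α := ℝ) n]
  have hGnonneg : ∀ n : ℕ, 0 ≤ G n := by
    intro n
    have := hGpos_den n
    positivity
  have hGmono : ∀ n : ℕ, G (n+1) ≤ G n := by
    intro n
    have h1' := hGpos_den n
    have h2' := hGpos_den (n+1)
    push_cast at h2'
    simp only [hG]
    push_cast
    gcongr
    all_goals nlinarith [Nat.cast_nonneg (α := ℝ) n]
  have hGlim : Filter.Tendsto G Filter.atTop (nhds 0) := by
    simp only [hG]
    have hbase : Filter.Tendsto (fun n : ℕ => c+2*b*(n:ℝ)) Filter.atTop Filter.atTop := by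
      apply Filter.tendsto_atTop_add_const_left
      exact Filter.Tendsto.const_mul_atTop hb2 tendsto_natCast_atTop_atTop
    have hden : Filter.Tendsto (fun n : ℕ => (c+2*b*(n:ℝ))^2) Filter.atTop Filter.atTop :=
      (tendsto_pow_atTop (two_ne_zero)).comp hbase
    simpa [div_eq_mul_inv] using (hden.inv_tendsto_atTop).const_mul (16*b)
  have hGsum := telescope_hasSum G hGmono hGnonneg hGlim
  -- simplify t n
  have htn : ∀ n : ℕ, (2*(b:ℂ))/(d n)^2 - ((1:ℂ)/(d n) - 1/(d (n+1)))
      = 4*(b:ℂ)^2/((d n)^2 * d (n+1)) := by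
    intro n
    rw [hfn n]
    have h1' := hdne n
    have h2' := hdne (n+1)
    rw [div_sub_div _ _ (pow_ne_zero 2 h1') (mul_ne_zero h1' h2'), hrec n]
    rw [div_eq_div_iff (by
        apply mul_ne_zero (pow_ne_zero 2 h1') (mul_ne_zero h1' (by rw [← hrec n]; exact h2')))
      (by apply mul_ne_zero (pow_ne_zero 2 h1') (by rw [← hrec n]; exact h2'))]
    ring
  have htnorm : ∀ n : ℕ, ‖(2*(b:ℂ))/(d n)^2 - ((1:ℂ)/(d n) - 1/(d (n+1)))‖ ≤ G n - G (n+1) := by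
    intro n
    have h4b : ‖(4:ℂ)*(b:ℂ)^2‖ = 4*b^2 := by
      rw [norm_mul, norm_pow, Complex.norm_real, Real.norm_eq_abs, abs_of_pos hb]
      simp
    rw [htn n, norm_div, h4b, norm_mul, norm_pow]
    set p : ℝ := c + 2*b*(n:ℝ) with hp
    set u : ℝ := c + 2*b*((n:ℝ)+1) with hu
    have hppos : 0 < p := hGpos_den n
    have hupos : 0 < u := by rw [hu]; nlinarith [Nat.cast_nonneg (α := ℝ) n]
    have hpu : p ≤ u := by rw [hp, hu]; nlinarith
    have hX : u/2 ≤ ‖d n‖ := habs_half n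
    have hY : u/2 ≤ ‖d (n+1)‖ := by
      have := habs_half (n+1)
      push_cast at this
      rw [hu]
      linarith
    have hGdiff : G n - G (n+1) = 16*b*(u^2-p^2)/(p^2*u^2) := by
      simp only [hG]
      push_cast
      rw [← hp, ← hu]
      field_simp
    rw [hGdiff]
    have hXpos := hd_abs_pos n
    have hYpos := hd_abs_pos (n+1)
    have hden : (u/2)^2*(u/2) ≤ ‖d n‖^2 * ‖d (n+1)‖ := by
      apply mul_le_mul _ hY (by positivity) (by positivity)
      apply pow_le_pow_left₀ (by positivity) hX
    have step1 : 4*b^2/(‖d n‖^2 * ‖d (n+1)‖) ≤ 4*b^2/((u/2)^2*(u/2)) := by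
      apply div_le_div_of_nonneg_left (by positivity) (by positivity) hden
    have step2 : 4*b^2/((u/2)^2*(u/2)) ≤ 16*b*(u^2-p^2)/(p^2*u^2) := by
      have hup : u = p + 2*b := by rw [hp, hu]; ring
      clear_value p u
      rw [div_le_div_iff₀ (by positivity) (by positivity), hup]
      have key : 0 ≤ 4*b^2*(p+2*b)^2*(p^2+6*b*p+4*b^2) := by positivity
      have hring : 16 * b * ((p + 2 * b) ^ 2 - p ^ 2) * (((p + 2 * b) / 2) ^ 2 * ((p + 2 * b) / 2))
          - 4 * b ^ 2 * (p ^ 2 * (p + 2 * b) ^ 2)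
          = 4 * b ^ 2 * (p + 2 * b) ^ 2 * (p ^ 2 + 6 * b * p + 4 * b ^ 2) := by ring
      linarith [key, hring]
    linarith
  have hsumnorm : Summable (fun n : ℕ => ‖(2*(b:ℂ))/(d n)^2 - ((1:ℂ)/(d n) - 1/(d (n+1)))‖) :=
    Summable.of_nonneg_of_le (fun n => norm_nonneg _) htnorm hGsum.summable
  calc ‖∑' n : ℕ, ((2*(b:ℂ))/(d n)^2 - ((1:ℂ)/(d n) - 1/(d (n+1))))‖
      ≤ ∑' n : ℕ, ‖(2*(b:ℂ))/(d n)^2 - ((1:ℂ)/(d n) - 1/(d (n+1)))‖ :=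
        norm_tsum_le_tsum_norm hsumnorm
    _ ≤ ∑' n : ℕ, (G n - G (n+1)) := Summable.tsum_le_tsum htnorm hsumnorm hGsum.summable
    _ = G 0 := hGsum.tsum_eq
    _ = 16*b/c^2 := by simp [hG]

lemma term_bound {v : ℂ} (hv : 1 ≤ v.re) (n : ℕ) :
    ‖1/(v + (n:ℂ))^2‖ ≤ 1/((n:ℝ)+1)^2 := by
  have h1 : ((n:ℝ)+1) ≤ (v + (n:ℂ)).re := by
    simp only [Complex.add_re, Complex.natCast_re]
    linarith
  have h2 : ((n:ℝ)+1) ≤ ‖v + (n:ℂ)‖ := le_trans h1 (Complex.re_le_norm _)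
  have hpos : (0:ℝ) < ‖v + (n:ℂ)‖ := lt_of_lt_of_le (by positivity) h2
  rw [norm_div, norm_one, norm_pow]
  have h3 : ((n:ℝ)+1)^2 ≤ ‖v + (n:ℂ)‖^2 := by
    apply pow_le_pow_left₀ (by positivity) h2
  rw [div_le_div_iff₀ (by positivity) (by positivity)]
  nlinarith [h3]

lemma trigamma_cont {w : ℝ → ℂ} (hw : Continuous w) (hre : ∀ η, 1 ≤ (w η).re) :
    Continuous (fun η => trigamma (w η)) := by
  have heq : (fun η => trigamma (w η)) = fun η => ∑' n : ℕ, 1/(w η + (n:ℂ))^2 := rfl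
  rw [heq]
  apply continuous_tsum (u := fun n : ℕ => 1/((n:ℝ)+1)^2) ?_ summable_shift ?_
  · intro n
    apply Continuous.div continuous_const ((hw.add continuous_const).pow 2)
    intro η
    apply pow_ne_zero
    intro h0
    have : ((n:ℝ)+1) ≤ (w η + (n:ℂ)).re := by
      simp only [Complex.add_re, Complex.natCast_re]
      linarith [hre η]
    rw [show w η + (n:ℂ) = 0 from h0] at this
    simp only [Complex.zero_re] at this
    nlinarith [Nat.cast_nonneg (α := ℝ) n]
  · intro n η
    exact term_bound (hre η) n

/-- Proposition 4 of the paper: the convolution with the kernel `μ̃`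
preserves the weighted bound. For `b > 0` and
`μ̃(z) = (1/(2b)) ψ₁(1 + z/(2b)) − 1/(z + 2b)`, there is `M > 0`, depending only on `b`,
such that for all `A > 2b`, `B > 0` and every continuous function `y` on the vertical
line `Re s = A` with `|y(A + iη)| ≤ B/|A + iη|²`, the convolution
`(μ̃ ∗ y)(z) = (1/(2π)) ∫ y(A + iη) μ̃(z − A − iη) dη` converges absolutely for every
`z` with `Re z ≥ A` and satisfies `|(μ̃ ∗ y)(z)| ≤ M b B / |z|²` there. -/
theorem stmt_15 (b : ℝ) (hb : 0 < b)
    (μt : ℂ → ℂ)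
    (hμt : ∀ z : ℂ, μt z = 1 / (2 * (b : ℂ)) * trigamma (1 + z / (2 * (b : ℂ)))
      - 1 / (z + 2 * (b : ℂ))) :
    ∃ M : ℝ, 0 < M ∧
      ∀ (A B : ℝ), 2 * b < A → 0 < B →
        ∀ y : ℂ → ℂ, ContinuousOn y {s : ℂ | s.re = A} →
          (∀ η : ℝ, ‖y ((A : ℂ) + η * I)‖ ≤ B / ‖(A : ℂ) + η * I‖ ^ 2) →
          ∀ z : ℂ, A ≤ z.re →
            Integrable (fun η : ℝ => y ((A : ℂ) + η * I) * μt (z - (A : ℂ) - η * I)) ∧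
            ‖(1 / (2 * Real.pi) : ℝ) •
                ∫ η : ℝ, y ((A : ℂ) + η * I) * μt (z - (A : ℂ) - η * I)‖
              ≤ M * b * B / ‖z‖ ^ 2 := by
  refine ⟨32 / b, by positivity, ?_⟩
  intro A B hA hB y hy hybound z hz
  have hπ : (0:ℝ) < Real.pi := Real.pi_pos
  have hA0 : 0 < A := by linarith
  set β : ℝ := z.re - A + 2*b with hβ
  have hβ2b : 2*b ≤ β := by rw [hβ]; linarith
  have hβpos : 0 < β := by linarith
  have hzre : 0 < z.re := by linarith
  have hzne : z ≠ 0 := by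
    intro h0
    rw [h0] at hzre
    simp at hzre
  set r : ℝ := ‖z‖ with hr
  have hrpos : 0 < r := by
    rw [hr]
    exact norm_pos_iff.mpr hzne
  -- continuity of the two factors
  have hcy : Continuous (fun η : ℝ => y ((A:ℂ) + η * I)) := by
    apply hy.comp_continuous
    · exact continuous_const.add (Complex.continuous_ofReal.mul continuous_const)
    · intro η
      simp [Complex.add_re, Complex.mul_re]
  have hreμ : ∀ η : ℝ, (0:ℝ) ≤ (z - (A:ℂ) - η * I).re := by
    intro η
    simp only [Complex.sub_re, Complex.ofReal_re, Complex.mul_re, Complex.I_re, Complex.I_im,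
      Complex.ofReal_im]
    simp
    linarith
  have h2bC : ((2:ℂ) * b) = ((2*b : ℝ) : ℂ) := by push_cast; ring
  have hcμ : Continuous (fun η : ℝ => μt (z - (A:ℂ) - η * I)) := by
    simp only [hμt]
    apply Continuous.sub
    · apply Continuous.mul continuous_const
      apply trigamma_cont
      · apply Continuous.add continuous_const
        apply Continuous.div_const
        exact (continuous_const.sub continuous_const).sub
          (Complex.continuous_ofReal.mul continuous_const)
      · intro η
        rw [Complex.add_re, h2bC, Complex.div_ofReal_re]
        have h1 : (0:ℝ) ≤ (z - (A:ℂ) - η * I).re := hreμ η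
        have : (0:ℝ) ≤ (z - (A:ℂ) - η * I).re / (2*b) := by positivity
        simp only [Complex.one_re]
        linarith
    · apply Continuous.div continuous_const
      · exact ((continuous_const.sub continuous_const).sub
          (Complex.continuous_ofReal.mul continuous_const)).add continuous_const
      · intro η
        intro h0
        have h1 := hreμ η
        have h2 : (z - (A:ℂ) - η * I + 2 * b).re = (z - (A:ℂ) - η * I).re + 2*b := by
          simp [Complex.add_re]
        rw [h0] at h2
        simp only [Complex.zero_re] at h2
        linarith
  have hcont : Continuous (fun η : ℝ => y ((A:ℂ) + η * I) * μt (z - (A:ℂ) - η * I)) :=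
    hcy.mul hcμ
  -- abs computations
  have habs2 : ∀ η : ℝ, ‖(A:ℂ) + η * I‖ ^ 2 = A^2 + η^2 := by
    intro η
    rw [Complex.sq_norm, Complex.normSq_apply]
    simp [Complex.add_re, Complex.add_im, Complex.mul_re, Complex.mul_im]
    ring
  have habsw : ∀ η : ℝ, ‖z - (A:ℂ) - η * I + 2 * b‖ ^ 2 = β^2 + (η - z.im)^2 := by
    intro η
    rw [Complex.sq_norm, Complex.normSq_apply, hβ]
    simp [Complex.add_re, Complex.add_im, Complex.sub_re, Complex.sub_im, Complex.mul_re,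
      Complex.mul_im]
    ring
  -- positivity facts
  have hapos : ∀ η : ℝ, (0:ℝ) < ‖(A:ℂ) + η * I‖ := by
    intro η
    have h1 : ((A:ℂ) + η * I).re = A := by simp [Complex.add_re, Complex.mul_re]
    have := Complex.re_le_norm ((A:ℂ) + η * I)
    rw [h1] at this
    linarith
  have hcpos : ∀ η : ℝ, (0:ℝ) < ‖z - (A:ℂ) - η * I + 2 * b‖ := by
    intro η
    have h2 : (z - (A:ℂ) - η * I + 2 * b).re = (z - (A:ℂ) - η * I).re + 2*b := by
      simp [Complex.add_re]
    have := Complex.re_le_norm (z - (A:ℂ) - η * I + 2 * b)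
    rw [h2] at this
    have := hreμ η
    linarith
  -- the dominating function
  set g : ℝ → ℝ := fun η => 64*b*B/r^2 * ((A^2+η^2)⁻¹ + (β^2+(η - z.im)^2)⁻¹) with hg
  have hrle : ∀ η : ℝ, r ≤ ‖(A:ℂ) + η * I‖ + ‖z - (A:ℂ) - η * I + 2 * b‖ := by
    intro η
    have htri : ‖z + 2*b‖ ≤ ‖(A:ℂ) + η * I‖
        + ‖z - (A:ℂ) - η * I + 2 * b‖ := by
      have : z + 2*(b:ℂ) = ((A:ℂ) + η * I) + (z - (A:ℂ) - η * I + 2 * b) := by ring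
      rw [this]
      exact norm_add_le _ _
    have hmono : r ≤ ‖z + 2*b‖ := by
      rw [hr]
      have h1 : Complex.normSq z ≤ Complex.normSq (z + 2*b) := by
        simp only [Complex.normSq_apply, Complex.add_re, Complex.add_im, Complex.mul_re,
          Complex.mul_im, Complex.re_ofNat, Complex.im_ofNat, Complex.ofReal_re, Complex.ofReal_im]
        ring_nf
        nlinarith [hzre, hb]
      simpa only [Complex.norm_def] using Real.sqrt_le_sqrt h1
    linarith
  have hbound : ∀ η : ℝ, ‖y ((A:ℂ) + η * I) * μt (z - (A:ℂ) - η * I)‖ ≤ g η := by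
    intro η
    rw [norm_mul]
    have hy1 : ‖y ((A:ℂ) + η * I)‖ ≤ B/(A^2+η^2) := by
      rw [← habs2 η]
      exact hybound η
    have hmu : ‖μt (z - (A:ℂ) - η * I)‖ ≤ 16*b/(β^2+(η - z.im)^2) := by
      rw [hμt]
      have := mu_bound b hb (z - (A:ℂ) - η * I) (hreμ η)
      rwa [habsw η] at this
    have hprod := prod_bound (‖(A:ℂ) + η * I‖)
      (‖z - (A:ℂ) - η * I + 2 * b‖) r (hapos η) (hcpos η) hrpos (hrle η)
    rw [habs2 η, habsw η] at hprod
    have hstep : ‖y ((A:ℂ) + η * I)‖ * ‖μt (z - (A:ℂ) - η * I)‖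
        ≤ (B/(A^2+η^2)) * (16*b/(β^2+(η - z.im)^2)) := by
      apply mul_le_mul hy1 hmu (norm_nonneg _) (by positivity)
    have he1 : (B/(A^2+η^2)) * (16*b/(β^2+(η - z.im)^2))
        = 16*b*B * (1/((A^2+η^2) * (β^2+(η - z.im)^2))) := by
      field_simp
    have he2 : 16*b*B * (1/((A^2+η^2) * (β^2+(η - z.im)^2)))
        ≤ 16*b*B * (4/r^2 * (1/(A^2+η^2) + 1/(β^2+(η - z.im)^2))) := by
      apply mul_le_mul_of_nonneg_left _ (by positivity)
      calc 1/((A^2+η^2) * (β^2+(η - z.im)^2)) = 1/((A^2+η^2)^1 * (β^2+(η - z.im)^2)^1) := by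
            norm_num
      _ ≤ _ := by
            have hA2 : A^2+η^2 > 0 := by positivity
            have hB2 : β^2+(η - z.im)^2 > 0 := by positivity
            calc 1/((A^2+η^2)^1 * (β^2+(η - z.im)^2)^1)
                = 1/((A^2+η^2) * (β^2+(η - z.im)^2)) := by norm_num
            _ ≤ 4/r^2 * (1/(A^2+η^2) + 1/(β^2+(η - z.im)^2)) := by
                  have := hprod
                  -- hprod : 1/(a^2 * c^2) ≤ 4/r^2 * (1/a^2 + 1/c^2) with a^2,c^2 rewritten
                  exact this
    have he3 : 16*b*B * (4/r^2 * (1/(A^2+η^2) + 1/(β^2+(η - z.im)^2))) = g η := by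
      rw [hg]
      field_simp
      ring
    calc ‖y ((A:ℂ) + η * I)‖ * ‖μt (z - (A:ℂ) - η * I)‖
        ≤ (B/(A^2+η^2)) * (16*b/(β^2+(η - z.im)^2)) := hstep
    _ = 16*b*B * (1/((A^2+η^2) * (β^2+(η - z.im)^2))) := he1
    _ ≤ 16*b*B * (4/r^2 * (1/(A^2+η^2) + 1/(β^2+(η - z.im)^2))) := he2
    _ = g η := he3
  -- integrability
  have hint2 : Integrable (fun η : ℝ => (β^2+(η - z.im)^2)⁻¹) := by
    have h := (lorentz0_integrable β hβpos).comp_sub_right z.im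
    exact h
  have hgint : Integrable g := by
    rw [hg]
    apply Integrable.const_mul
    exact (lorentz0_integrable A hA0).add hint2
  have hfint : Integrable (fun η : ℝ => y ((A:ℂ) + η * I) * μt (z - (A:ℂ) - η * I)) := by
    apply Integrable.mono' hgint hcont.aestronglyMeasurable
    filter_upwards with η using hbound η
  refine ⟨hfint, ?_⟩
  -- computing ∫ g
  have hIg : ∫ η : ℝ, g η = 64*b*B/r^2 * (Real.pi/A + Real.pi/β) := by
    rw [hg]
    rw [MeasureTheory.integral_const_mul]
    congr 1
    rw [integral_add (lorentz0_integrable A hA0) hint2]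
    rw [lorentz0_integral A hA0]
    congr 1
    have : (fun η : ℝ => (β^2+(η - z.im)^2)⁻¹)
        = fun η : ℝ => (fun u : ℝ => (β^2+u^2)⁻¹) (η - z.im) := rfl
    rw [this, integral_sub_right_eq_self (fun u : ℝ => (β^2+u^2)⁻¹) z.im]
    exact lorentz0_integral β hβpos
  -- final bound
  have hsmul : ‖(1 / (2 * Real.pi) : ℝ) •
      ∫ η : ℝ, y ((A:ℂ) + η * I) * μt (z - (A:ℂ) - η * I)‖
      = (1 / (2 * Real.pi)) * ‖∫ η : ℝ, y ((A:ℂ) + η * I) * μt (z - (A:ℂ) - η * I)‖ := by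
    rw [norm_smul, Real.norm_eq_abs, abs_of_pos (by positivity)]
  rw [hsmul]
  have h2 : ‖∫ η : ℝ, y ((A:ℂ) + η * I) * μt (z - (A:ℂ) - η * I)‖ ≤ ∫ η : ℝ, g η := by
    calc ‖∫ η : ℝ, y ((A:ℂ) + η * I) * μt (z - (A:ℂ) - η * I)‖
        ≤ ∫ η : ℝ, ‖y ((A:ℂ) + η * I) * μt (z - (A:ℂ) - η * I)‖ :=
          norm_integral_le_integral_norm _
    _ ≤ ∫ η : ℝ, g η := integral_mono hfint.norm hgint hbound
  have he1 : Real.pi/A + Real.pi/β ≤ Real.pi/b := by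
    have i1 : Real.pi/A ≤ Real.pi/(2*b) :=
      div_le_div_of_nonneg_left hπ.le (by linarith) hA.le
    have i2 : Real.pi/β ≤ Real.pi/(2*b) :=
      div_le_div_of_nonneg_left hπ.le (by linarith) hβ2b
    have i3 : Real.pi/(2*b) + Real.pi/(2*b) = Real.pi/b := by
      field_simp
      ring
    linarith
  calc (1 / (2 * Real.pi)) * ‖∫ η : ℝ, y ((A:ℂ) + η * I) * μt (z - (A:ℂ) - η * I)‖
      ≤ (1 / (2 * Real.pi)) * ∫ η : ℝ, g η := by
        apply mul_le_mul_of_nonneg_left h2 (by positivity)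
    _ = (1 / (2 * Real.pi)) * (64*b*B/r^2 * (Real.pi/A + Real.pi/β)) := by rw [hIg]
    _ ≤ (1 / (2 * Real.pi)) * (64*b*B/r^2 * (Real.pi/b)) := by
        apply mul_le_mul_of_nonneg_left _ (by positivity)
        apply mul_le_mul_of_nonneg_left he1 (by positivity)
    _ = 32 / b * b * B / r ^ 2 := by
        field_simp
        ring
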